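/- For every nonnegative integer m, Σ_{n=0}^{m} n! · 𝓗_n · S₂(m,n) = Σ_{n=0}^{m} ((n+1)!/2^{n+2}) · y(n,1/2) · S₂(m,n+1). -/

import Mathlib

/-- The numbers `y(n,λ)` from the paper:
`y(n,λ) = ∑_{j=0}^{n} (-1)^n / ((j+1) · λ^{j+1} · (λ-1)^{n+1-j})`. -/
noncomputable def ynum (n : ℕ) (l : ℝ) : ℝ :=
  ∑ j ∈ Finset.range (n + 1),
    (-1 : ℝ) ^ n / ((j + 1) * l ^ (j + 1) * (l - 1) ^ (n + 1 - j))

/-- The alternating harmonic numbers `𝓗_n = ∑_{j=1}^{n} (-1)^j/j` (with `𝓗_0 = 0`). -/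
noncomputable def altHarm (n : ℕ) : ℝ :=
  ∑ j ∈ Finset.range n, (-1 : ℝ) ^ (j + 1) / ((j : ℝ) + 1)

/-- The Stirling numbers of the second kind,
`S₂(n,k) = (1/k!)·∑_{c=0}^{k} (-1)^{k-c}·C(k,c)·c^n`. -/
def S2 (n k : ℕ) : ℚ :=
  (1 / (k.factorial : ℚ)) *
    ∑ c ∈ Finset.range (k + 1), (-1 : ℚ) ^ (k - c) * (k.choose c : ℚ) * (c : ℚ) ^ n

/-- The `k`-th finite difference of `x ↦ x^m` vanishes when `m < k`. -/
lemma alt_vanish : ∀ m k : ℕ, m < k →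
    ∑ c ∈ Finset.range (k + 1), (-1 : ℚ) ^ c * (k.choose c : ℚ) * (c : ℚ) ^ m = 0 := by
  intro m
  induction m using Nat.strong_induction_on with
  | _ m IH =>
    intro k hk
    match m with
    | 0 =>
      simp only [pow_zero, mul_one]
      have h := Int.alternating_sum_range_choose (n := k)
      rw [if_neg (by omega)] at h
      exact_mod_cast congrArg (Int.cast : ℤ → ℚ) h
    | m' + 1 =>
      obtain ⟨k', rfl⟩ : ∃ k'', k = k'' + 1 := ⟨k - 1, by omega⟩
      rw [Finset.sum_range_succ']
      rw [show ((0:ℕ):ℚ) = 0 from rfl, zero_pow (by omega : m' + 1 ≠ 0), mul_zero, add_zero]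
      have key : ∀ d ∈ Finset.range (k' + 1),
          (-1 : ℚ) ^ (d + 1) * ((k' + 1).choose (d + 1) : ℚ) * ((d + 1 : ℕ) : ℚ) ^ (m' + 1)
          = ∑ i ∈ Finset.range (m' + 1),
              (-((k' : ℚ) + 1) * (m'.choose i : ℚ)) * ((-1 : ℚ) ^ d * (k'.choose d : ℚ) * (d : ℚ) ^ i) := by
        intro d _
        have hn : ((k' + 1).choose (d + 1) * (d + 1) : ℕ) = (k' + 1) * k'.choose d := by
          have h := Nat.add_one_mul_choose_eq k' d
          omega
        have hc : ((k' + 1).choose (d + 1) : ℚ) * ((d : ℚ) + 1) = ((k' : ℚ) + 1) * (k'.choose d : ℚ) := by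
          exact_mod_cast congrArg (Nat.cast : ℕ → ℚ) hn
        have hbin : ((d : ℚ) + 1) ^ m' = ∑ i ∈ Finset.range (m' + 1), (d : ℚ) ^ i * (m'.choose i : ℚ) := by
          simpa using add_pow (d : ℚ) 1 m'
        push_cast
        calc (-1 : ℚ) ^ (d + 1) * ((k' + 1).choose (d + 1) : ℚ) * ((d : ℚ) + 1) ^ (m' + 1)
            = (-1 : ℚ) ^ (d+1) * (((k' + 1).choose (d + 1) : ℚ) * ((d:ℚ)+1)) * ((d : ℚ) + 1) ^ m' := by
              ring
          _ = (-1 : ℚ) ^ (d+1) * (((k' : ℚ) + 1) * (k'.choose d : ℚ)) * ∑ i ∈ Finset.range (m' + 1), (d : ℚ) ^ i * (m'.choose i : ℚ) := by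
              rw [hc, hbin]
          _ = _ := by
              rw [Finset.mul_sum]
              apply Finset.sum_congr rfl
              intro i _
              rw [pow_succ]
              ring
      rw [Finset.sum_congr rfl key, Finset.sum_comm]
      apply Finset.sum_eq_zero
      intro i hi
      rw [← Finset.mul_sum, IH i (by simpa using hi) k' (by simp at hi; omega), mul_zero]

/-- `S₂(m, m+1) = 0`. -/
lemma S2_succ_self (m : ℕ) : S2 m (m + 1) = 0 := by
  unfold S2
  have h : ∀ c ∈ Finset.range (m + 2),
      (-1 : ℚ) ^ (m + 1 - c) * ((m+1).choose c : ℚ) * (c : ℚ) ^ m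
      = (-1 : ℚ) ^ (m+1) * ((-1 : ℚ) ^ c * ((m+1).choose c : ℚ) * (c : ℚ) ^ m) := by
    intro c hc
    simp only [Finset.mem_range] at hc
    have h1 : (-1 : ℚ) ^ (m + 1 - c) * (-1 : ℚ) ^ c = (-1 : ℚ) ^ (m + 1) := by
      rw [← pow_add]
      congr 1
      omega
    have h2 : (-1:ℚ)^c * (-1:ℚ)^c = 1 := by
      rw [← pow_add, ← two_mul, pow_mul]; norm_num
    have h3 : (-1 : ℚ) ^ (m + 1 - c) = (-1:ℚ)^(m+1) * (-1:ℚ)^c := by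
      calc (-1 : ℚ) ^ (m + 1 - c) = (-1 : ℚ) ^ (m + 1 - c) * ((-1:ℚ)^c * (-1:ℚ)^c) := by
            rw [h2, mul_one]
        _ = ((-1 : ℚ) ^ (m + 1 - c) * (-1:ℚ)^c) * (-1:ℚ)^c := by ring
        _ = (-1:ℚ)^(m+1) * (-1:ℚ)^c := by rw [h1]
    rw [h3]; ring
  rw [Finset.sum_congr rfl h, ← Finset.mul_sum, alt_vanish m (m+1) (by omega)]
  ring

/-- `y(n, 1/2) = 2^(n+2) · 𝓗_{n+1}`. -/
lemma ynum_half (n : ℕ) : ynum n (1/2) = 2 ^ (n + 2) * altHarm (n + 1) := by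
  unfold ynum altHarm
  rw [Finset.mul_sum]
  apply Finset.sum_congr rfl
  intro j hj
  simp only [Finset.mem_range] at hj
  obtain ⟨k, rfl⟩ : ∃ k, n = j + k := ⟨n - j, by omega⟩
  rw [show j + k + 1 - j = k + 1 by omega]
  have h2 : ((1:ℝ)/2 - 1) = -(1/2) := by norm_num
  rw [h2, neg_pow]
  have hj1 : ((j:ℝ) + 1) ≠ 0 := by positivity
  have hhalf : ((1:ℝ)/2) ^ (j+1) ≠ 0 := by positivity
  have hhalf2 : ((1:ℝ)/2) ^ (k+1) ≠ 0 := by positivity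
  have hsgn : ((-1:ℝ) ^ (k+1)) ≠ 0 := by
    intro h; have := pow_eq_zero_iff (n := k+1) (by omega) |>.mp h; norm_num at this
  field_simp
  ring
  have e1 : ((1:ℝ)/2)^j * 2^j = 1 := by rw [← mul_pow]; norm_num
  have e2 : ((-1:ℝ)/2)^k * 2^k = (-1)^k := by rw [← mul_pow]; norm_num
  linear_combination (-((-1:ℝ)^j * ((-1:ℝ)/2)^k * 2^k)) * e1 - (-1:ℝ)^j * e2

theorem stmt_15 (m : ℕ) :
    ∑ n ∈ Finset.range (m + 1), (n.factorial : ℝ) * altHarm n * (S2 m n : ℝ) =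
      ∑ n ∈ Finset.range (m + 1),
        (((n + 1).factorial : ℝ) / 2 ^ (n + 2)) * ynum n (1 / 2) * (S2 m (n + 1) : ℝ) := by
  set f : ℕ → ℝ := fun k => (k.factorial : ℝ) * altHarm k * (S2 m k : ℝ) with hf
  have hterm : ∀ n ∈ Finset.range (m + 1),
      (((n + 1).factorial : ℝ) / 2 ^ (n + 2)) * ynum n (1 / 2) * (S2 m (n + 1) : ℝ)
      = f (n + 1) := by
    intro n _
    rw [ynum_half, hf]
    have h2 : ((2:ℝ)) ^ (n+2) ≠ 0 := by positivity
    field_simp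
  rw [Finset.sum_congr rfl hterm]
  have h0 : f 0 = 0 := by simp [hf, altHarm]
  have hm : f (m + 1) = 0 := by
    simp [hf, S2_succ_self m]
  have e1 := Finset.sum_range_succ' f (m + 1)
  have e2 := Finset.sum_range_succ f (m + 1)
  rw [h0, add_zero] at e1
  rw [hm, add_zero] at e2
  rw [← e1, e2]
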